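/- arXiv:1407.5257 — 3 statements merged into one kernel-verified Lean document; each statement's English description precedes it below -/
import Mathlib

section
/- Let z be an integer and let M be any element of SL(2,ℤ), and set a = M 0 0. Then the trace of the matrix underlying M · T_z · M⁻¹ · S_z equals 2 - a^2 * z^2. -/
/-- `Tz z` is the element of `SL(2,ℤ)` with underlying matrix `!![1, -z; 0, 1]`. -/
def Tz (z : ℤ) : Matrix.SpecialLinearGroup (Fin 2) ℤ :=
  ⟨!![1, -z; 0, 1], by simp [Matrix.det_fin_two_of]⟩

/-- `Sz z` is the element of `SL(2,ℤ)` with underlying matrix `!![1, 0; z, 1]`. -/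
def Sz (z : ℤ) : Matrix.SpecialLinearGroup (Fin 2) ℤ :=
  ⟨!![1, 0; z, 1], by simp [Matrix.det_fin_two_of]⟩

theorem stmt_3 (z : ℤ) (M : Matrix.SpecialLinearGroup (Fin 2) ℤ)
    (a : ℤ) (ha : a = (M : Matrix (Fin 2) (Fin 2) ℤ) 0 0) :
    Matrix.trace ((M * Tz z * M⁻¹ * Sz z : Matrix.SpecialLinearGroup (Fin 2) ℤ) :
        Matrix (Fin 2) (Fin 2) ℤ)
      = 2 - a ^ 2 * z ^ 2 := by
  have hdet : (M : Matrix (Fin 2) (Fin 2) ℤ).det = 1 := M.2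
  rw [Matrix.det_fin_two] at hdet
  simp only [Matrix.SpecialLinearGroup.coe_mul, Matrix.SpecialLinearGroup.coe_inv,
    Matrix.adjugate_fin_two, Matrix.trace_fin_two]
  set A := (M : Matrix (Fin 2) (Fin 2) ℤ)
  simp [Tz, Sz, Matrix.mul_apply, Fin.sum_univ_two, ha]
  ring_nf
  nlinarith [hdet]
end

section
/- Let z be a nonzero integer and let M ∈ SL(2,ℤ). If the trace of the matrix underlying M · T_z · M⁻¹ · S_z equals the trace of the matrix underlying T_z · S_z, then M 0 0 = 1 or M 0 0 = -1. -/
theorem stmt_5 (z : ℤ) (hz : z ≠ 0) (M : Matrix.SpecialLinearGroup (Fin 2) ℤ)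
    (htr : Matrix.trace ((M * Tz z * M⁻¹ * Sz z : Matrix.SpecialLinearGroup (Fin 2) ℤ) :
        Matrix (Fin 2) (Fin 2) ℤ)
      = Matrix.trace ((Tz z * Sz z : Matrix.SpecialLinearGroup (Fin 2) ℤ) :
        Matrix (Fin 2) (Fin 2) ℤ)) :
    (M : Matrix (Fin 2) (Fin 2) ℤ) 0 0 = 1 ∨ (M : Matrix (Fin 2) (Fin 2) ℤ) 0 0 = -1 := by
  have h := htr
  rw [Matrix.SpecialLinearGroup.coe_mul, Matrix.SpecialLinearGroup.coe_mul,
    Matrix.SpecialLinearGroup.coe_mul, Matrix.SpecialLinearGroup.coe_mul,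
    Matrix.SpecialLinearGroup.coe_inv] at h
  simp only [Matrix.SpecialLinearGroup.coe_mul, Matrix.SpecialLinearGroup.coe_inv,
    Matrix.adjugate_fin_two, Tz, Sz, Matrix.trace_fin_two] at h
  set a := (M : Matrix (Fin 2) (Fin 2) ℤ) 0 0 with ha
  simp [Matrix.mul_apply, Fin.sum_univ_two] at h
  have hdet : (M : Matrix (Fin 2) (Fin 2) ℤ) 0 0 * (M : Matrix (Fin 2) (Fin 2) ℤ) 1 1
      - (M : Matrix (Fin 2) (Fin 2) ℤ) 0 1 * (M : Matrix (Fin 2) (Fin 2) ℤ) 1 0 = 1 := by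
    have := M.property
    rwa [Matrix.det_fin_two] at this
  have h0 : z * z * (a * a - 1) = 0 := by linear_combination (-1 : ℤ) * h + 2 * hdet
  have key : a * a = 1 := by
    rcases mul_eq_zero.mp h0 with h1 | h1
    · exact absurd h1 (mul_ne_zero hz hz)
    · linarith
  exact mul_self_eq_one_iff.mp key
end

section
/- Let z be an integer with z ≥ 2 and let M be an element of the subgroup of SL(2,ℤ) generated by T_z and S_z. If the trace of the matrix underlying M · T_z · M⁻¹ · S_z equals the trace of the matrix underlying T_z · S_z, then there exist integers m and n such that M = S_z^n · T_z^m. -/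
lemma Sz_mul_Sz (a b : ℤ) : Sz a * Sz b = Sz (a + b) := by
  apply Subtype.ext
  show (Sz a).1 * (Sz b).1 = _
  simp [Sz, Matrix.mul_fin_two]

lemma Sz_zero : Sz 0 = 1 := by
  apply Subtype.ext
  show _ = (1 : Matrix (Fin 2) (Fin 2) ℤ)
  rw [Matrix.one_fin_two]
  simp [Sz]

lemma Sz_inv (a : ℤ) : (Sz a)⁻¹ = Sz (-a) := by
  refine inv_eq_of_mul_eq_one_right ?_
  rw [Sz_mul_Sz]; simp [Sz_zero]

lemma Sz_zpow (z : ℤ) (n : ℤ) : Sz z ^ n = Sz (n * z) := by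
  induction n using Int.induction_on with
  | zero => simp [Sz_zero]
  | succ k ih => rw [zpow_add_one, ih, Sz_mul_Sz]; ring_nf
  | pred k ih => rw [zpow_sub_one, ih, Sz_inv, Sz_mul_Sz]; ring_nf

lemma Tz_mul_Tz (a b : ℤ) : Tz a * Tz b = Tz (a + b) := by
  apply Subtype.ext
  show (Tz a).1 * (Tz b).1 = _
  simp [Tz, Matrix.mul_fin_two]

lemma Tz_zero : Tz 0 = 1 := by
  apply Subtype.ext
  show _ = (1 : Matrix (Fin 2) (Fin 2) ℤ)
  rw [Matrix.one_fin_two]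
  simp [Tz]

lemma Tz_inv (a : ℤ) : (Tz a)⁻¹ = Tz (-a) := by
  refine inv_eq_of_mul_eq_one_right ?_
  rw [Tz_mul_Tz]; simp [Tz_zero]

lemma Tz_zpow (z : ℤ) (m : ℤ) : Tz z ^ m = Tz (m * z) := by
  induction m using Int.induction_on with
  | zero => simp [Tz_zero]
  | succ k ih => rw [zpow_add_one, ih, Tz_mul_Tz]; ring_nf
  | pred k ih => rw [zpow_sub_one, ih, Tz_inv, Tz_mul_Tz]; ring_nf

theorem stmt_7 (z : ℤ) (hz : 2 ≤ z) (M : Matrix.SpecialLinearGroup (Fin 2) ℤ)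
    (hM : M ∈ Subgroup.closure {Tz z, Sz z})
    (htr : Matrix.trace ((M * Tz z * M⁻¹ * Sz z : Matrix.SpecialLinearGroup (Fin 2) ℤ) :
        Matrix (Fin 2) (Fin 2) ℤ)
      = Matrix.trace ((Tz z * Sz z : Matrix.SpecialLinearGroup (Fin 2) ℤ) :
        Matrix (Fin 2) (Fin 2) ℤ)) :
    ∃ m n : ℤ, M = Sz z ^ n * Tz z ^ m := by
  -- Step 1: congruence invariant on the closure
  have key : ∀ N : Matrix.SpecialLinearGroup (Fin 2) ℤ, N ∈ Subgroup.closure {Tz z, Sz z} →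
      (z ∣ N.1 0 1 ∧ z ∣ N.1 1 0 ∧ z^2 ∣ (N.1 0 0 - 1) ∧ z^2 ∣ (N.1 1 1 - 1)) := by
    intro N hN
    induction hN using Subgroup.closure_induction with
    | mem x hx =>
      rcases hx with h | h <;> subst h <;>
        exact ⟨by simp [Tz, Sz], by simp [Tz, Sz], by simp [Tz, Sz], by simp [Tz, Sz]⟩
    | one => simp
    | mul x y hx hy px py =>
      obtain ⟨⟨b1, hb1⟩, ⟨c1, hc1⟩, ⟨a1, ha1⟩, ⟨d1, hd1⟩⟩ := px
      obtain ⟨⟨b2, hb2⟩, ⟨c2, hc2⟩, ⟨a2, ha2⟩, ⟨d2, hd2⟩⟩ := py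
      have ea1 : x.1 0 0 = z^2 * a1 + 1 := by linarith
      have ed1 : x.1 1 1 = z^2 * d1 + 1 := by linarith
      have ea2 : y.1 0 0 = z^2 * a2 + 1 := by linarith
      have ed2 : y.1 1 1 = z^2 * d2 + 1 := by linarith
      have hmul : ∀ i j, (x * y).1 i j = x.1 i 0 * y.1 0 j + x.1 i 1 * y.1 1 j := by
        intro i j
        show (x.1 * y.1) i j = _
        rw [Matrix.mul_apply, Fin.sum_univ_two]
      refine ⟨?_, ?_, ?_, ?_⟩
      · rw [hmul, hb1, hb2, ed2]; exact ⟨x.1 0 0 * b2 + b1 * (z^2*d2+1), by ring⟩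
      · rw [hmul, hc1, hc2, ea2]; exact ⟨(z^2*a2+1) * c1 + x.1 1 1 * c2, by ring⟩
      · rw [hmul, ea1, ea2, hb1, hc2]
        exact ⟨z^2*a1*a2 + a1 + a2 + b1*c2, by ring⟩
      · rw [hmul, ed1, ed2, hb2, hc1]
        exact ⟨z^2*d1*d2 + d1 + d2 + c1*b2, by ring⟩
    | inv x hx px =>
      obtain ⟨pb, pc, pa, pd⟩ := px
      rw [Matrix.SpecialLinearGroup.SL2_inv_expl x]
      refine ⟨?_, ?_, ?_, ?_⟩
      · simpa using pb.neg_right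
      · simpa using pc.neg_right
      · simpa using pd
      · simpa using pa
  obtain ⟨⟨b', hb'⟩, ⟨c', hc'⟩, ha, hd⟩ := key M hM
  -- Step 2: the trace condition forces the (0,0) entry to be ±1
  have hdet : M.1 0 0 * M.1 1 1 - M.1 0 1 * M.1 1 0 = 1 := by
    have := M.2
    rwa [Matrix.det_fin_two] at this
  simp only [Matrix.SpecialLinearGroup.coe_mul] at htr
  rw [Matrix.SpecialLinearGroup.coe_inv, Matrix.adjugate_fin_two] at htr
  have hcoe : ∀ A B : Matrix.SpecialLinearGroup (Fin 2) ℤ,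
      ((A * B : Matrix.SpecialLinearGroup (Fin 2) ℤ) : Matrix (Fin 2) (Fin 2) ℤ)
        = (A : Matrix (Fin 2) (Fin 2) ℤ) * B := fun _ _ => rfl
  simp only [hcoe, Matrix.trace_fin_two, Matrix.mul_apply, Fin.sum_univ_two, Tz, Sz] at htr
  norm_num [Matrix.of_apply, Matrix.cons_val', Matrix.cons_val_zero, Matrix.cons_val_one,
    Matrix.head_cons, Matrix.empty_val', Matrix.cons_val_fin_one, Matrix.head_fin_const, Matrix.mul_apply, Fin.sum_univ_two] at htr
  have hsq : z^2 * ((M.1 0 0 - 1) * (M.1 0 0 + 1)) = 0 := by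
    linear_combination -htr + 2 * hdet
  have hz2 : z^2 ≠ 0 := pow_ne_zero 2 (by omega : z ≠ 0)
  rcases mul_eq_zero.mp hsq with h | h
  · exact absurd h hz2
  rcases mul_eq_zero.mp h with h1 | h1
  swap
  · -- M 0 0 = -1 is impossible: z² ∣ M 0 0 - 1 = -2
    exfalso
    have ha' : z^2 ∣ (2 : ℤ) := by
      refine (dvd_neg).mp ?_
      have : M.1 0 0 - 1 = -2 := by linarith
      rw [← this]; exact ha
    have := Int.le_of_dvd (by norm_num) ha'
    nlinarith
  -- Step 3: conclude
  have ha0 : M.1 0 0 = 1 := by linarith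
  refine ⟨-b', c', ?_⟩
  rw [Sz_zpow, Tz_zpow]
  apply Subtype.ext
  show M.1 = (Sz (c' * z)).1 * (Tz (-b' * z)).1
  have hd' : M.1 1 1 = 1 + z * b' * (z * c') := by
    rw [← hb', ← hc']
    linear_combination hdet - M.1 1 1 * ha0
  simp only [Sz, Tz, Matrix.mul_fin_two]
  ext i j
  fin_cases i <;> fin_cases j <;> simp [ha0, hb', hc', hd'] <;> ring
end
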